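/- Let 𝔤 be a finite-dimensional real Lie algebra with Killing form K, let 𝔥 ⊆ 𝔤 be a Lie subalgebra such that the restriction of K to 𝔥 is nondegenerate, set 𝔪 = 𝔥^⊥ (so that 𝔤 = 𝔥 ⊕ 𝔪 as vector spaces), let P : 𝔤 → 𝔪 be the linear projection onto 𝔪 along 𝔥, and let ⟨·,·⟩ be any inner product on 𝔪. If the restriction of K to 𝔪 is not identically zero, then there exists a nonzero vector Y ∈ 𝔪 such that ⟨Y, P([Y,Z])⟩ = 0 for all Z ∈ 𝔤. -/

import Mathlib

/-- The `K`-orthogonal complement of a Lie subalgebra `H`, where `K` is the Killing form: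
`H^⊥ = {x ∈ 𝔤 : K(x, h) = 0 for all h ∈ H}`. -/
def killingOrth (R L : Type*) [CommRing R] [LieRing L] [LieAlgebra R L]
    (H : LieSubalgebra R L) : Submodule R L where
  carrier := {x | ∀ h ∈ H, killingForm R L x h = 0}
  add_mem' := fun hx hy h hh => by
    rw [map_add, LinearMap.add_apply, hx h hh, hy h hh, add_zero]
  zero_mem' := fun h hh => by simp
  smul_mem' := fun c x hx h hh => by
    rw [map_smul, LinearMap.smul_apply, hx h hh, smul_zero]

/-- Let `𝔤` be a finite-dimensional real Lie algebra whose Killing form `K` restricts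
nondegenerately to a Lie subalgebra `𝔥`, let `𝔪 = 𝔥^⊥`, let `P` be the linear projection onto
`𝔪` along `𝔥`, and let `⟨·,·⟩` be an inner product (a symmetric positive definite bilinear
form `ip`) on `𝔪`.  If the restriction of `K` to `𝔪` is not identically zero, then there is a
nonzero `Y ∈ 𝔪` with `⟨Y, P [Y, Z]⟩ = 0` for all `Z ∈ 𝔤` (a geodesic vector). -/
theorem exists_geodesic_vector_of_killing_not_zero_on_orth
    (L : Type*) [LieRing L] [LieAlgebra ℝ L] [Module.Finite ℝ L]
    (H : LieSubalgebra ℝ L)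
    (hnd : ∀ h ∈ H, (∀ h' ∈ H, killingForm ℝ L h h' = 0) → h = 0)
    (P : L →ₗ[ℝ] L)
    (hP1 : ∀ x : L, P x ∈ killingOrth ℝ L H)
    (hP2 : ∀ x : L, x - P x ∈ H)
    (ip : killingOrth ℝ L H →ₗ[ℝ] killingOrth ℝ L H →ₗ[ℝ] ℝ)
    (ip_symm : ∀ u v : killingOrth ℝ L H, ip u v = ip v u)
    (ip_posdef : ∀ u : killingOrth ℝ L H, u ≠ 0 → 0 < ip u u)
    (hK : ∃ u v : killingOrth ℝ L H, killingForm ℝ L (u : L) (v : L) ≠ 0) :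
    ∃ Y : killingOrth ℝ L H, Y ≠ 0 ∧
      ∀ Z : L, ip Y ⟨P ⁅(Y : L), Z⁆, hP1 ⁅(Y : L), Z⁆⟩ = 0 := by
  letI M : Submodule ℝ L := killingOrth ℝ L H
  -- Inner product space structure on M from ip
  letI core : InnerProductSpace.Core ℝ (killingOrth ℝ L H) :=
    { toInner := ⟨fun u v => ip u v⟩
      conj_inner_symm := fun u v =>
        show (starRingEnd ℝ) (ip v u) = ip u v by
          rw [starRingEnd_apply, star_trivial, ip_symm]
      re_inner_nonneg := fun u => by
        show 0 ≤ ip u u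
        rcases eq_or_ne u 0 with h | h
        · simp [h]
        · exact le_of_lt (ip_posdef u h)
      definite := fun u h => by
        by_contra hu
        exact absurd h (ne_of_gt (ip_posdef u hu))
      add_left := fun u v w => show ip (u + v) w = ip u w + ip v w by simp
      smul_left := fun u v c =>
        show ip (c • u) v = (starRingEnd ℝ) c * ip u v by
          simp [starRingEnd_apply]
      }
  letI : NormedAddCommGroup (killingOrth ℝ L H) := core.toNormedAddCommGroup
  letI : InnerProductSpace ℝ (killingOrth ℝ L H) := InnerProductSpace.ofCore core.toCore
  have hinner : ∀ u v : killingOrth ℝ L H, (inner ℝ u v : ℝ) = ip u v := fun _ _ => rfl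
  haveI : FiniteDimensional ℝ L := ‹Module.Finite ℝ L›
  -- The Killing form restricted to M as a bilinear form
  set B : killingOrth ℝ L H →ₗ[ℝ] killingOrth ℝ L H →ₗ[ℝ] ℝ :=
    ((killingForm ℝ L).compl₁₂ (killingOrth ℝ L H).subtype (killingOrth ℝ L H).subtype) with hB
  have hBval : ∀ u v : killingOrth ℝ L H, B u v = killingForm ℝ L (u : L) (v : L) := fun u v => rfl
  -- The self-adjoint operator A representing B w.r.t. the inner product
  set A : killingOrth ℝ L H →ₗ[ℝ] killingOrth ℝ L H :=
    { toFun := fun u => (InnerProductSpace.toDual ℝ (killingOrth ℝ L H)).symm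
        ((B u).toContinuousLinearMap)
      map_add' := fun u v => by simp only [map_add]
      map_smul' := fun c u => by
        simp only [map_smul, RingHom.id_apply] } with hA
  have hAval : ∀ u v : killingOrth ℝ L H, (inner ℝ (A u) v : ℝ) = B u v := by
    intro u v
    rw [hA]
    exact InnerProductSpace.toDual_symm_apply
  have hBsymm : ∀ u v : killingOrth ℝ L H, B u v = B v u := by
    intro u v
    simpa [hBval] using LieModule.traceForm_comm ℝ L L (u : L) (v : L)
  have hAsym : A.IsSymmetric := by
    intro u v
    rw [hAval, real_inner_comm, hAval, hBsymm]
  -- A is nonzero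
  obtain ⟨u0, v0, huv⟩ := hK
  have hAne : A ≠ 0 := by
    intro h
    apply huv
    have := hAval u0 v0
    rw [h] at this
    simpa [hBval] using this.symm
  -- find an eigenvector with nonzero eigenvalue
  have htop : (⨆ μ, Module.End.eigenspace A μ) = ⊤ := by
    have := hAsym.orthogonalComplement_iSup_eigenspaces_eq_bot
    rwa [Submodule.orthogonal_eq_bot_iff] at this
  have hex : ∃ μ : ℝ, μ ≠ 0 ∧ Module.End.eigenspace A μ ≠ ⊥ := by
    by_contra h
    push_neg at h
    apply hAne
    have hle : (⨆ μ, Module.End.eigenspace A μ) ≤ LinearMap.ker A := by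
      apply iSup_le
      intro μ
      rcases eq_or_ne μ 0 with rfl | hμ
      · rw [Module.End.eigenspace_zero]
      · rw [h μ hμ]; exact bot_le
    rw [htop] at hle
    ext w
    simpa using hle (Submodule.mem_top (x := w))
  obtain ⟨μ, hμ, hes⟩ := hex
  obtain ⟨Y, hYmem, hYne⟩ := (Submodule.ne_bot_iff _).mp hes
  have hYeig : A Y = μ • Y := Module.End.mem_eigenspace_iff.mp hYmem
  refine ⟨Y, hYne, fun Z => ?_⟩
  set W : killingOrth ℝ L H := ⟨P ⁅(Y : L), Z⁆, hP1 ⁅(Y : L), Z⁆⟩ with hW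
  -- K(Y, W) = 0
  have hKW : killingForm ℝ L (Y : L) (W : L) = 0 := by
    have h1 : killingForm ℝ L (Y : L) ⁅(Y : L), Z⁆ = 0 := by
      have := LieModule.traceForm_apply_lie_apply ℝ L L (Y : L) (Y : L) Z
      simpa using this.symm
    have h2 : killingForm ℝ L (Y : L) (⁅(Y : L), Z⁆ - P ⁅(Y : L), Z⁆) = 0 :=
      Y.2 _ (hP2 ⁅(Y : L), Z⁆)
    have : killingForm ℝ L (Y : L) ⁅(Y : L), Z⁆
        - killingForm ℝ L (Y : L) (P ⁅(Y : L), Z⁆) = 0 := by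
      rw [← map_sub]; exact h2
    have := this
    rw [h1] at this
    simpa [hW] using (by linarith : killingForm ℝ L (Y : L) (P ⁅(Y : L), Z⁆) = 0)
  -- conclude
  have : μ * ip Y W = 0 := by
    have h1 : (inner ℝ (A Y) W : ℝ) = killingForm ℝ L (Y : L) (W : L) := hAval Y W
    rw [hYeig] at h1
    rw [hKW] at h1
    simpa [real_inner_smul_left, hinner] using h1
  have := mul_eq_zero.mp this
  rcases this with h | h
  · exact absurd h hμ
  · exact h
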